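/- Tree ordered geometric resolution lower bound: for every integer n > 1 there exists a constant α > 0, depending only on n, such that for every bit depth d ≥ 1 the following holds. In dimension n with depth d, let C be the union of the following sets of dyadic boxes: C_1 = all boxes whose first component is a length-d string ending in 0 and whose other components are λ; C_{n+1} = all boxes whose n-th component is a length-d string ending in 1 and whose other components are λ; and, for 2 ≤ i ≤ n, C_i = all boxes whose (i−1)-st and i-th components are length-d strings whose last bits are complementary (one ends in 0, the other in 1) and whose other components are λ. Then the union of the boxes of C covers the universal box ⟨λ,…,λ⟩, and every tree ordered geometric resolution proof of ⟨λ,…,λ⟩ from C — with respect to the coordinate order (1,…,n), and likewise with respect to its reverse — has at least α·N^{n/2} internal nodes, where N = |C|. -/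

import Mathlib

/-- An `n`-dimensional dyadic box: each component is a binary string (a dyadic
interval), the empty string denoting the whole domain `{0,1}^d`. -/
abbrev DyadicBox (n : ℕ) := Fin n → List Bool

namespace DyadicBox

/-- `b'` contains `b` iff every component of `b'` is a prefix of the
corresponding component of `b`. -/
def Contains {n : ℕ} (b' b : DyadicBox n) : Prop := ∀ i, b' i <+: b i

/-- A point at bit depth `d`: every component has length exactly `d`. -/
def IsPoint {n : ℕ} (d : ℕ) (p : DyadicBox n) : Prop := ∀ i, (p i).length = d

/-- A set of boxes `A` covers a box `b` at bit depth `d`: every point lying in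
`b` lies in some box of `A`. -/
def Covers {n : ℕ} (d : ℕ) (A : Set (DyadicBox n)) (b : DyadicBox n) : Prop :=
  ∀ p : DyadicBox n, IsPoint d p → Contains b p → ∃ a ∈ A, Contains a p

/-- `w` is the geometric resolvent of `w₁` and `w₂` on coordinate `ℓ`:
the `ℓ`-th components are `x0` and `x1` and become `x`, and every other
component of `w` is the longer of the two (prefix-comparable) components. -/
def IsResolvent {n : ℕ} (w₁ w₂ : DyadicBox n) (ℓ : Fin n) (w : DyadicBox n) : Prop :=
  (∃ x : List Bool, w₁ ℓ = x ++ [false] ∧ w₂ ℓ = x ++ [true] ∧ w ℓ = x) ∧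
  ∀ j : Fin n, j ≠ ℓ →
    (w₁ j <+: w₂ j ∧ w j = w₂ j) ∨ (w₂ j <+: w₁ j ∧ w j = w₁ j)

/-- A (tagged) geometric resolution derivation from `A`: an entry tagged `true`
is the geometric resolvent of two earlier entries; an entry tagged `false` is
an axiom, i.e. belongs to `A`. -/
def IsDerivation {n : ℕ} (A : Set (DyadicBox n)) (L : List (Bool × DyadicBox n)) : Prop :=
  ∀ k : Fin L.length,
    if (L.get k).1 then
      ∃ i j : Fin L.length, (i : ℕ) < (k : ℕ) ∧ (j : ℕ) < (k : ℕ) ∧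
        ∃ ℓ : Fin n, IsResolvent ((L.get i).2) ((L.get j).2) ℓ ((L.get k).2)
    else (L.get k).2 ∈ A

/-- The number of resolution steps of a derivation. -/
def steps {n : ℕ} (L : List (Bool × DyadicBox n)) : ℕ := (L.filter (·.1)).length

/-- `z` is derivable from `A` by geometric resolutions: it occurs in some
geometric resolution derivation from `A`. -/
def Derivable {n : ℕ} (A : Set (DyadicBox n)) (z : DyadicBox n) : Prop :=
  ∃ L : List (Bool × DyadicBox n), IsDerivation A L ∧ z ∈ L.map (·.2)

end DyadicBox

/-- Ordered geometric resolution with respect to the coordinate order given by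
`σ` (so `σ 0` is the first coordinate, …, `σ (n-1)` the last): `w` is the
ordered resolvent of `w₁` and `w₂` on the `ℓ`-th coordinate in this order. All
components after position `ℓ` are `λ`; the components at position `ℓ` are `x0`
and `x1` and become `x`; each earlier component of `w` is the longer of the two
(prefix-comparable) components. -/
def IsOrderedResolvent (n : ℕ) (σ : Equiv.Perm (Fin n))
    (w₁ w₂ : DyadicBox n) (ℓ : Fin n) (w : DyadicBox n) : Prop :=
  (∃ x : List Bool, w₁ (σ ℓ) = x ++ [false] ∧ w₂ (σ ℓ) = x ++ [true] ∧ w (σ ℓ) = x) ∧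
  (∀ m : Fin n, ℓ < m → w₁ (σ m) = [] ∧ w₂ (σ m) = [] ∧ w (σ m) = []) ∧
  (∀ m : Fin n, m < ℓ →
    (w₁ (σ m) <+: w₂ (σ m) ∧ w (σ m) = w₂ (σ m)) ∨
    (w₂ (σ m) <+: w₁ (σ m) ∧ w (σ m) = w₁ (σ m)))

/-- A (tagged) ordered geometric resolution derivation from `A` with respect to
the coordinate order `σ`. -/
def IsOrderedDerivation (n : ℕ) (σ : Equiv.Perm (Fin n)) (A : Set (DyadicBox n))
    (L : List (Bool × DyadicBox n)) : Prop :=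
  ∀ k : Fin L.length,
    if (L.get k).1 then
      ∃ i j : Fin L.length, (i : ℕ) < (k : ℕ) ∧ (j : ℕ) < (k : ℕ) ∧
        ∃ ℓ : Fin n, IsOrderedResolvent n σ ((L.get i).2) ((L.get j).2) ℓ ((L.get k).2)
    else (L.get k).2 ∈ A

/-- A tree ordered geometric resolution proof (w.r.t. the coordinate order `σ`)
of a box from the set `A`, together with its number of internal nodes: leaves
are labeled by boxes of `A`, and each internal node is labeled by the ordered
geometric resolvent of the labels of its two children. -/
inductive OrderedTreeProof (n : ℕ) (σ : Equiv.Perm (Fin n)) (A : Set (DyadicBox n)) :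
    DyadicBox n → ℕ → Prop where
  | leaf {b : DyadicBox n} : b ∈ A → OrderedTreeProof n σ A b 0
  | node {b₁ b₂ b : DyadicBox n} {s₁ s₂ : ℕ} {ℓ : Fin n} :
      OrderedTreeProof n σ A b₁ s₁ → OrderedTreeProof n σ A b₂ s₂ →
      IsOrderedResolvent n σ b₁ b₂ ℓ b → OrderedTreeProof n σ A b (s₁ + s₂ + 1)

namespace TORLB

def Cond (n d : ℕ) (b : DyadicBox n) : Prop :=
  (∃ t : List Bool, t.length + 1 = d ∧
      ∀ i : Fin n, ((i : ℕ) = 0 → b i = t ++ [false]) ∧ ((i : ℕ) ≠ 0 → b i = [])) ∨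
  (∃ t : List Bool, t.length + 1 = d ∧
      ∀ i : Fin n, ((i : ℕ) = n - 1 → b i = t ++ [true]) ∧ ((i : ℕ) ≠ n - 1 → b i = [])) ∨
  (∃ j : ℕ, j + 2 ≤ n ∧ ∃ t u : List Bool, ∃ v : Bool,
      t.length + 1 = d ∧ u.length + 1 = d ∧
      ∀ i : Fin n, ((i : ℕ) = j → b i = t ++ [v]) ∧
        ((i : ℕ) = j + 1 → b i = u ++ [!v]) ∧
        ((i : ℕ) ≠ j → (i : ℕ) ≠ j + 1 → b i = []))

/-- `IsOrderedResolvent` for the identity order, with the permutation unfolded. -/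
def PlainRes {n : ℕ} (w₁ w₂ : DyadicBox n) (ℓ : Fin n) (w : DyadicBox n) : Prop :=
  (∃ x : List Bool, w₁ ℓ = x ++ [false] ∧ w₂ ℓ = x ++ [true] ∧ w ℓ = x) ∧
  (∀ m : Fin n, ℓ < m → w₁ m = [] ∧ w₂ m = [] ∧ w m = []) ∧
  (∀ m : Fin n, m < ℓ →
    (w₁ m <+: w₂ m ∧ w m = w₂ m) ∨ (w₂ m <+: w₁ m ∧ w m = w₁ m))

variable {n d : ℕ} {C : Set (DyadicBox n)}

lemma plainRes {w₁ w₂ w : DyadicBox n} {ℓ : Fin n}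
    (h : IsOrderedResolvent n (Equiv.refl (Fin n)) w₁ w₂ ℓ w) : PlainRes w₁ w₂ ℓ w := h

/-- both premises' components below `ℓ` are prefixes of the resolvent's. -/
lemma plainRes_prefix {w₁ w₂ w : DyadicBox n} {ℓ : Fin n} (h : PlainRes w₁ w₂ ℓ w)
    {m : Fin n} (hm : m < ℓ) : w₁ m <+: w m ∧ w₂ m <+: w m := by
  rcases h.2.2 m hm with ⟨h1, h2⟩ | ⟨h1, h2⟩
  · rw [h2]; exact ⟨h1, List.prefix_refl _⟩
  · rw [h2]; exact ⟨List.prefix_refl _, h1⟩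

lemma last_eq {l₁ l₂ : List Bool} {a b : Bool} (h : l₁ ++ [a] = l₂ ++ [b]) : a = b := by
  have := congrArg List.getLast? h; simp at this; exact this

lemma prefix_full {l₁ l₂ : List Bool} {d : ℕ} (h : l₁ <+: l₂) (h1 : l₁.length = d)
    (h2 : l₂.length ≤ d) : l₁ = l₂ :=
  h.eq_of_length (by have := h.length_le; omega)

/-- every component of a box of `C` is empty or full. -/
lemma clen (hC : ∀ b : DyadicBox n, b ∈ C ↔ Cond n d b) {b : DyadicBox n} (hb : b ∈ C) :
    ∀ i, b i = [] ∨ (b i).length = d := by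
  intro i
  rcases (hC b).mp hb with ⟨t, ht, hp⟩ | ⟨t, ht, hp⟩ | ⟨j, hj, t, u, v, ht, hu, hp⟩
  · by_cases h : (i : ℕ) = 0
    · right; rw [(hp i).1 h]; simp; omega
    · left; exact (hp i).2 h
  · by_cases h : (i : ℕ) = n - 1
    · right; rw [(hp i).1 h]; simp; omega
    · left; exact (hp i).2 h
  · by_cases h1 : (i : ℕ) = j
    · right; rw [(hp i).1 h1]; simp; omega
    · by_cases h2 : (i : ℕ) = j + 1
      · right; rw [(hp i).2.1 h2]; simp; omega
      · left; exact (hp i).2.2 h1 h2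

/-- classification of a box of `C` by its topmost nonempty coordinate. -/
lemma mem_C_top (hC : ∀ b : DyadicBox n, b ∈ C ↔ Cond n d b) {b : DyadicBox n} (hb : b ∈ C)
    (i : Fin n) (hne : b i ≠ []) (htop : ∀ m, i < m → b m = []) :
    (b i).length = d ∧
    ( ((i : ℕ) = 0 ∧ (∃ y, b i = y ++ [false]) ∧ ∀ m, m ≠ i → b m = [])
    ∨ ((i : ℕ) = n - 1 ∧ (∃ y, b i = y ++ [true]) ∧ ∀ m, m ≠ i → b m = [])
    ∨ (∃ ip : Fin n, (ip : ℕ) + 1 = (i : ℕ) ∧ ∃ t u : List Bool, ∃ v : Bool,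
        b ip = t ++ [v] ∧ b i = u ++ [!v] ∧ t.length + 1 = d ∧ u.length + 1 = d ∧
        ∀ m, m ≠ i → m ≠ ip → b m = [])) := by
  rcases (hC b).mp hb with ⟨t, ht, hp⟩ | ⟨t, ht, hp⟩ | ⟨j, hj, t, u, v, ht, hu, hp⟩
  · have hi : (i : ℕ) = 0 := by
      by_contra h; exact hne ((hp i).2 h)
    have hbi := (hp i).1 hi
    refine ⟨by rw [hbi]; simp; omega, Or.inl ⟨hi, ⟨t, hbi⟩, ?_⟩⟩
    intro m hm
    exact (hp m).2 (by intro h0; exact hm (Fin.ext (by omega)))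
  · have hi : (i : ℕ) = n - 1 := by
      by_contra h; exact hne ((hp i).2 h)
    have hbi := (hp i).1 hi
    refine ⟨by rw [hbi]; simp; omega, Or.inr (Or.inl ⟨hi, ⟨t, hbi⟩, ?_⟩)⟩
    intro m hm
    exact (hp m).2 (by intro h0; exact hm (Fin.ext (by omega)))
  · have hi : (i : ℕ) = j + 1 := by
      rcases eq_or_ne (i : ℕ) j with h1 | h1
      · exfalso
        have hj1 : j + 1 < n := by omega
        have e1 : b ⟨j + 1, hj1⟩ = u ++ [!v] := (hp ⟨j + 1, hj1⟩).2.1 rfl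
        have e2 : b ⟨j + 1, hj1⟩ = [] := htop _ (by simp [Fin.lt_def]; omega)
        simp [e2] at e1
      · by_contra h2; exact hne ((hp i).2.2 h1 h2)
    have hip : j < n := by omega
    have hbi : b i = u ++ [!v] := (hp i).2.1 hi
    refine ⟨by rw [hbi]; simp; omega,
      Or.inr (Or.inr ⟨⟨j, hip⟩, by simp; omega, t, u, v, (hp ⟨j, hip⟩).1 rfl, hbi, ht, hu, ?_⟩)⟩
    intro m hm1 hm2
    refine (hp m).2.2 (by intro h; exact hm2 (Fin.ext (by simp [h])))
      (by intro h; exact hm1 (Fin.ext (by omega)))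

/-- all components of boxes in a proof have length at most `d`. -/
lemma lenLe (hC : ∀ b : DyadicBox n, b ∈ C ↔ Cond n d b) : ∀ {s : ℕ} {B : DyadicBox n},
    OrderedTreeProof n (Equiv.refl (Fin n)) C B s → ∀ i, (B i).length ≤ d := by
  intro s B h
  induction h with
  | leaf hb =>
    intro i; rcases clen hC hb i with h | h <;> simp [h]
  | @node b₁ b₂ b s₁ s₂ ℓ p₁ p₂ hres ih₁ ih₂ =>
    intro i
    have hres := plainRes hres
    rcases lt_trichotomy i ℓ with h | h | h
    · rcases hres.2.2 i h with ⟨_, he⟩ | ⟨_, he⟩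
      · rw [he]; exact ih₂ i
      · rw [he]; exact ih₁ i
    · obtain ⟨x, h1, _, h3⟩ := hres.1
      subst h
      have := ih₁ i; rw [h1] at this; simp at this
      rw [h3]; omega
    · rw [(hres.2.1 i h).2.2]; simp

/-- components strictly below a nonempty component are empty or full. -/
lemma shape (hC : ∀ b : DyadicBox n, b ∈ C ↔ Cond n d b) : ∀ {s : ℕ} {B : DyadicBox n},
    OrderedTreeProof n (Equiv.refl (Fin n)) C B s →
    ∀ i j : Fin n, i < j → B j ≠ [] → B i = [] ∨ (B i).length = d := by
  intro s B h
  induction h with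
  | leaf hb => intro i j _ _; exact clen hC hb i
  | @node b₁ b₂ b s₁ s₂ ℓ p₁ p₂ hres ih₁ ih₂ =>
    intro i j hij hj
    have hres := plainRes hres
    have hjℓ : j ≤ ℓ := by
      by_contra h; push_neg at h
      exact hj (hres.2.1 j h).2.2
    have hiℓ : i < ℓ := lt_of_lt_of_le hij hjℓ
    obtain ⟨x, h1, h2, _⟩ := hres.1
    rcases hres.2.2 i hiℓ with ⟨_, he⟩ | ⟨_, he⟩
    · rw [he]; exact ih₂ i ℓ hiℓ (by rw [h2]; simp)
    · rw [he]; exact ih₁ i ℓ hiℓ (by rw [h1]; simp)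


/-- Key structural lemma ("descending to a dead leaf"): a provable box whose
topmost nonempty component ends in `0`, sitting at coordinate `ℓ' ≥ 1`, and
whose component at `ℓ' - 1` is not a full string ending in `1`, must be an
axiom. -/
lemma desc (hC : ∀ b : DyadicBox n, b ∈ C ↔ Cond n d b) :
    ∀ (s : ℕ) (B : DyadicBox n) (ℓ' : Fin n),
    OrderedTreeProof n (Equiv.refl (Fin n)) C B s →
    0 < (ℓ' : ℕ) →
    (∀ m, ℓ' < m → B m = []) →
    (∃ y, B ℓ' = y ++ [false]) →
    (∀ m : Fin n, (m : ℕ) + 1 = (ℓ' : ℕ) → ∀ y, B m = y ++ [true] → (B m).length ≠ d) →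
    B ∈ C := by
  intro s
  induction s using Nat.strong_induction_on with
  | _ s IH =>
    intro B ℓ' prf hpos htop hend hctx
    rcases prf with ⟨hb⟩ | @⟨b₁, b₂, B, s₁, s₂, lr, p₁, p₂, hres0⟩
    · exact hb
    · exfalso
      have hres := plainRes hres0
      have hB : ∀ i, (B i).length ≤ d := lenLe hC (.node p₁ p₂ hres0)
      obtain ⟨x, e1, e2, e3⟩ := hres.1
      obtain ⟨y, hy⟩ := hend
      have hge : ℓ' ≤ lr := by
        by_contra h; push_neg at h
        have := (hres.2.1 ℓ' h).2.2
        rw [hy] at this; simp at this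
      rcases eq_or_lt_of_le hge with heq | hlt
      · -- resolution exactly at ℓ'
        subst heq
        -- the `x0`-premise is not `FE1` at the predecessor
        have hnb : ∀ m : Fin n, (m : ℕ) + 1 = (ℓ' : ℕ) →
            ∀ z, b₁ m = z ++ [true] → (b₁ m).length ≠ d := by
          intro m hm z hz hzl
          have hmlt : m < ℓ' := Fin.lt_def.mpr (by omega)
          have hpre := (plainRes_prefix hres hmlt).1
          have : b₁ m = B m := prefix_full hpre hzl (hB m)
          exact hctx m hm z (by rw [← this]; exact hz) (by rw [← this]; exact hzl)
        have hb₁C : b₁ ∈ C := by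
          refine IH s₁ (by omega) b₁ ℓ' p₁ hpos (fun m hm => (hres.2.1 m hm).1) ⟨x, e1⟩ hnb
        obtain ⟨hlen, hcase⟩ := mem_C_top hC hb₁C ℓ' (by rw [e1]; simp)
          (fun m hm => (hres.2.1 m hm).1)
        rcases hcase with ⟨h0, _, _⟩ | ⟨_, ⟨z, hz⟩, _⟩ | ⟨ip, hip, t, u, v, hipv, hiv, htl, _, _⟩
        · omega
        · rw [e1] at hz; exact absurd (last_eq hz) (by simp)
        · have hv : v = true := by
            rw [e1] at hiv
            have := last_eq hiv.symm; simp at this; simp [this]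
          rw [hv] at hipv
          exact hnb ip hip t hipv (by rw [hipv]; simp; omega)
      · -- resolution strictly above ℓ'
        have hxnil : x = [] := by
          have := htop lr hlt; rw [this] at e3; exact e3.symm
        rw [hxnil] at e1 e2; simp at e1 e2
        -- not `FE1` at the predecessor of `lr` for `b₁`
        have hnb : ∀ m : Fin n, (m : ℕ) + 1 = (lr : ℕ) →
            ∀ z, b₁ m = z ++ [true] → (b₁ m).length ≠ d := by
          intro m hm z hz hzl
          have hmlt : m < lr := Fin.lt_def.mpr (by omega)
          have hpre := (plainRes_prefix hres hmlt).1
          rcases lt_trichotomy ((m : ℕ)) ((ℓ' : ℕ)) with h | h | h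
          · omega
          · have hmℓ : m = ℓ' := Fin.ext h
            subst hmℓ
            have hfull : b₁ m = B m := prefix_full hpre hzl (hB m)
            rw [hfull, hy] at hz
            exact absurd (last_eq hz.symm) (by simp)
          · have : B m = [] := htop m (Fin.lt_def.mpr (by omega))
            rw [this] at hpre
            rw [List.prefix_nil.mp hpre] at hz
            simp at hz
        have hb₁C : b₁ ∈ C := by
          refine IH s₁ (by omega) b₁ lr p₁ (by omega) (fun m hm => (hres.2.1 m hm).1)
            ⟨[], e1⟩ hnb
        obtain ⟨hlen, hcase⟩ := mem_C_top hC hb₁C lr (by rw [e1]; simp)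
          (fun m hm => (hres.2.1 m hm).1)
        rcases hcase with ⟨h0, _, _⟩ | ⟨_, ⟨z, hz⟩, _⟩ | ⟨ip, hip, t, u, v, hipv, hiv, htl, _, _⟩
        · omega
        · rw [e1] at hz
          exact absurd (last_eq (show ([] : List Bool) ++ [false] = z ++ [true] from by
            simpa using hz)) (by simp)
        · have hv : v = true := by
            rw [e1] at hiv
            have := last_eq (show ([] : List Bool) ++ [false] = u ++ [!v] from by
              simpa using hiv)
            simpa using this.symm
          rw [hv] at hipv
          exact hnb ip hip t hipv (by rw [hipv]; simp; omega)


/-- The recursive lower-bound function: cost of a full non-axiom box whose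
topmost nonempty coordinate is `n - 2 - r`. -/
def Pf (d : ℕ) : ℕ → ℕ
  | 0 => 2 ^ d
  | r + 1 => 2 ^ (d - 1) * (Pf d r + 1)

lemma Pf_ge (d : ℕ) : ∀ r, 2 ^ d * 2 ^ ((d - 1) * r) ≤ Pf d r := by
  intro r
  induction r with
  | zero => simp [Pf]
  | succ r ih =>
    have : 2 ^ ((d - 1) * (r + 1)) = 2 ^ (d - 1) * 2 ^ ((d - 1) * r) := by
      rw [← pow_add]; ring_nf
    calc 2 ^ d * 2 ^ ((d - 1) * (r + 1)) = 2 ^ (d - 1) * (2 ^ d * 2 ^ ((d - 1) * r)) := by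
          rw [this]; ring
      _ ≤ 2 ^ (d - 1) * Pf d r := by exact Nat.mul_le_mul_left _ ih
      _ ≤ Pf d (r + 1) := Nat.mul_le_mul_left _ (by omega)

/-- The lower bound for a non-axiom box with topmost nonempty coordinate `ℓv`
whose component there has length `k`. -/
def Gd (n d : ℕ) (ℓv k : ℕ) : ℕ :=
  if ℓv = n - 1 then 2 ^ (d - k)
  else if k = d then Pf d (n - 2 - ℓv)
  else 2 ^ (d - 1 - k) * (Pf d (n - 2 - ℓv) + 1)

/-- The main counting lemma. -/
lemma main (hn : 1 < n) (hd2 : 2 ≤ d)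
    (hC : ∀ b : DyadicBox n, b ∈ C ↔ Cond n d b) :
    ∀ (s : ℕ) (B : DyadicBox n) (ℓ : Fin n),
    OrderedTreeProof n (Equiv.refl (Fin n)) C B s →
    (∀ m, ℓ < m → B m = []) → B ℓ ≠ [] → B ∉ C →
    Gd n d (ℓ : ℕ) (B ℓ).length ≤ s + 1 := by
  intro s
  induction s using Nat.strong_induction_on with
  | _ s IH =>
    intro B ℓ prf htop hne hnc
    rcases prf with ⟨hb⟩ | @⟨b₁, b₂, B, s₁, s₂, lr, p₁, p₂, hres0⟩
    · exact absurd hb hnc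
    · have hres := plainRes hres0
      have hB : ∀ i, (B i).length ≤ d := lenLe hC (.node p₁ p₂ hres0)
      obtain ⟨x, e1, e2, e3⟩ := hres.1
      have hk1 : 0 < (B ℓ).length := List.length_pos_iff.mpr hne
      have hkd : (B ℓ).length ≤ d := hB ℓ
      rcases lt_trichotomy lr ℓ with hlt | heq | hgt
      · exact absurd (hres.2.1 ℓ hlt).2.2 hne
      · -- resolution exactly at the top coordinate ℓ
        subst heq
        have hb₁top : ∀ m, lr < m → b₁ m = [] := fun m hm => (hres.2.1 m hm).1
        have hb₂top : ∀ m, lr < m → b₂ m = [] := fun m hm => (hres.2.1 m hm).2.1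
        have hxk : (B lr).length = x.length := by rw [e3]
        have hlen1 : (b₁ lr).length = x.length + 1 := by rw [e1]; simp
        have hlen2 : (b₂ lr).length = x.length + 1 := by rw [e2]; simp
        have hxd : x.length + 1 ≤ d := by have := lenLe hC p₁ lr; omega
        by_cases hℓn : (lr : ℕ) = n - 1
        · -- top coordinate is the last one
          rw [Gd, if_pos hℓn, hxk]
          by_cases hsmall : x.length + 2 ≤ d
          · have hb₁nc : b₁ ∉ C := by
              intro h
              have h' := clen hC h lr
              rw [e1] at h'; simp at h'; omega
            have hb₂nc : b₂ ∉ C := by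
              intro h
              have h' := clen hC h lr
              rw [e2] at h'; simp at h'; omega
            have i1 := IH s₁ (by omega) b₁ lr p₁ hb₁top (by rw [e1]; simp) hb₁nc
            have i2 := IH s₂ (by omega) b₂ lr p₂ hb₂top (by rw [e2]; simp) hb₂nc
            rw [Gd, if_pos hℓn, hlen1] at i1
            rw [Gd, if_pos hℓn, hlen2] at i2
            have hpow : 2 ^ (d - x.length) = 2 ^ (d - (x.length + 1)) * 2 := by
              rw [← pow_succ]; congr 1; omega
            omega
          · have : 2 ^ (d - x.length) ≤ 2 ^ 1 :=
              Nat.pow_le_pow_right (by norm_num) (by omega)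
            simp at this; omega
        · -- top coordinate is not the last one
          have hxlt : x.length < d := by omega
          rw [Gd, if_neg hℓn, hxk, if_neg (by omega)]
          by_cases hsmall : x.length + 2 ≤ d
          · have hb₁nc : b₁ ∉ C := by
              intro h
              have h' := clen hC h lr
              rw [e1] at h'; simp at h'; omega
            have hb₂nc : b₂ ∉ C := by
              intro h
              have h' := clen hC h lr
              rw [e2] at h'; simp at h'; omega
            have i1 := IH s₁ (by omega) b₁ lr p₁ hb₁top (by rw [e1]; simp) hb₁nc
            have i2 := IH s₂ (by omega) b₂ lr p₂ hb₂top (by rw [e2]; simp) hb₂nc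
            rw [Gd, if_neg hℓn, hlen1, if_neg (by omega)] at i1
            rw [Gd, if_neg hℓn, hlen2, if_neg (by omega)] at i2
            have hpow : 2 ^ (d - 1 - x.length) = 2 ^ (d - 1 - (x.length + 1)) * 2 := by
              rw [← pow_succ]; congr 1; omega
            have hA : 2 ^ (d - 1 - x.length) * (Pf d (n - 2 - (lr : ℕ)) + 1)
                = 2 ^ (d - 1 - (x.length + 1)) * (Pf d (n - 2 - (lr : ℕ)) + 1)
                  + 2 ^ (d - 1 - (x.length + 1)) * (Pf d (n - 2 - (lr : ℕ)) + 1) := by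
              rw [hpow]; ring
            omega
          · -- the premises are full: at most one of them is an axiom
            have hxd1 : x.length + 1 = d := by omega
            have hnotboth : b₁ ∉ C ∨ b₂ ∉ C := by
              by_contra h
              push_neg at h
              obtain ⟨h1, h2⟩ := h
              obtain ⟨hl1, hc1⟩ := mem_C_top hC h1 lr (by rw [e1]; simp) hb₁top
              obtain ⟨hl2, hc2⟩ := mem_C_top hC h2 lr (by rw [e2]; simp) hb₂top
              -- b₂ forces a pair pattern with predecessor ending in false
              rcases hc2 with ⟨_, ⟨z, hz⟩, _⟩ | ⟨h0, _, _⟩ | ⟨ip2, hip2, t2, u2, v2, ha2, hb2, ht2, _, _⟩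
              · rw [e2] at hz; exact absurd (last_eq hz) (by simp)
              · exact hℓn h0
              · have hv2 : v2 = false := by
                  rw [e2] at hb2
                  have := last_eq hb2.symm; simp at this; simp [this]
                rw [hv2] at ha2
                rcases hc1 with ⟨h0, _, _⟩ | ⟨h0, _, _⟩ | ⟨ip1, hip1, t1, u1, v1, ha1, hb1, ht1, _, _⟩
                · omega
                · exact hℓn h0
                · have hv1 : v1 = true := by
                    rw [e1] at hb1
                    have := last_eq hb1.symm; simp at this; simp [this]
                  rw [hv1] at ha1
                  have hipeq : ip1 = ip2 := Fin.ext (by omega)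
                  subst hipeq
                  have hiplt : ip1 < lr := Fin.lt_def.mpr (by omega)
                  have q1 : b₁ ip1 = B ip1 :=
                    prefix_full (plainRes_prefix hres hiplt).1 (by rw [ha1]; simp; omega)
                      (hB ip1)
                  have q2 : b₂ ip1 = B ip1 :=
                    prefix_full (plainRes_prefix hres hiplt).2 (by rw [ha2]; simp; omega)
                      (hB ip1)
                  rw [ha1] at q1; rw [ha2] at q2
                  have := last_eq (q1.trans q2.symm)
                  simp at this
            have hone : Pf d (n - 2 - (lr : ℕ)) ≤ s₁ + s₂ + 1 := by
              rcases hnotboth with hcc | hcc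
              · have i1 := IH s₁ (by omega) b₁ lr p₁ hb₁top (by rw [e1]; simp) hcc
                rw [Gd, if_neg hℓn, hlen1, if_pos hxd1] at i1
                omega
              · have i2 := IH s₂ (by omega) b₂ lr p₂ hb₂top (by rw [e2]; simp) hcc
                rw [Gd, if_neg hℓn, hlen2, if_pos hxd1] at i2
                omega
            have : d - 1 - x.length = 0 := by omega
            rw [this]
            omega
      · -- resolution strictly above the top coordinate ℓ: a "spawn"
        have hb₁top : ∀ m, lr < m → b₁ m = [] := fun m hm => (hres.2.1 m hm).1
        have hb₂top : ∀ m, lr < m → b₂ m = [] := fun m hm => (hres.2.1 m hm).2.1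
        have hxnil : x = [] := by
          have := htop lr hgt; rw [this] at e3; exact e3.symm
        rw [hxnil] at e1 e2; simp at e1 e2
        -- B is full at ℓ
        have hfull : (B ℓ).length = d := by
          rcases hres.2.2 ℓ hgt with ⟨hp, he⟩ | ⟨hp, he⟩
          · rcases shape hC p₂ ℓ lr hgt (by rw [e2]; simp) with h' | h'
            · rw [he] at hne; exact absurd h' hne
            · rw [he]; exact h'
          · rcases shape hC p₁ ℓ lr hgt (by rw [e1]; simp) with h' | h'
            · rw [he] at hne; exact absurd h' hne
            · rw [he]; exact h'
        have hℓn : (ℓ : ℕ) ≠ n - 1 := by have := lr.isLt; omega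
        rw [Gd, if_neg hℓn, if_pos hfull]
        -- the spawn coordinate is exactly ℓ + 1
        have hlr : (lr : ℕ) = (ℓ : ℕ) + 1 := by
          by_contra hne'
          have hgt2 : (ℓ : ℕ) + 1 < (lr : ℕ) := by
            have := Fin.lt_def.mp hgt; omega
          have hb₁C : b₁ ∈ C := by
            refine desc hC s₁ b₁ lr p₁ (by omega) hb₁top ⟨[], e1⟩ ?_
            intro m hm z hz _
            have hmlt : m < lr := Fin.lt_def.mpr (by omega)
            have hpre := (plainRes_prefix hres hmlt).1
            have : B m = [] := htop m (Fin.lt_def.mpr (by omega))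
            rw [this] at hpre
            rw [List.prefix_nil.mp hpre] at hz
            simp at hz
          have h' := clen hC hb₁C lr
          rw [e1] at h'; simp at h'; omega
        -- the two premises of the spawn are partial, hence not axioms
        have hb₁nc : b₁ ∉ C := by
          intro h
          have h' := clen hC h lr
          rw [e1] at h'; simp at h'; omega
        have hb₂nc : b₂ ∉ C := by
          intro h
          have h' := clen hC h lr
          rw [e2] at h'; simp at h'; omega
        have i1 := IH s₁ (by omega) b₁ lr p₁ hb₁top (by rw [e1]; simp) hb₁nc
        have i2 := IH s₂ (by omega) b₂ lr p₂ hb₂top (by rw [e2]; simp) hb₂nc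
        have hlen1 : (b₁ lr).length = 1 := by rw [e1]; simp
        have hlen2 : (b₂ lr).length = 1 := by rw [e2]; simp
        rw [Gd, hlen1] at i1
        rw [Gd, hlen2] at i2
        by_cases hlrn : (lr : ℕ) = n - 1
        · rw [if_pos hlrn] at i1 i2
          have hℓval : n - 2 - (ℓ : ℕ) = 0 := by omega
          rw [hℓval]
          have : 2 ^ d ≤ 2 ^ (d - 1) + 2 ^ (d - 1) := by
            have : 2 ^ d = 2 ^ (d - 1) * 2 := by rw [← pow_succ]; congr 1; omega
            omega
          simp only [Pf]
          omega
        · rw [if_neg hlrn, if_neg (by omega)] at i1 i2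
          have hstep : n - 2 - (ℓ : ℕ) = (n - 2 - (lr : ℕ)) + 1 := by
            have := lr.isLt; omega
          rw [hstep]
          simp only [Pf]
          have h21 : 2 ^ (d - 1) = 2 ^ (d - 1 - 1) * 2 := by rw [← pow_succ]; congr 1; omega
          have hA : 2 ^ (d - 1) * (Pf d (n - 2 - (lr : ℕ)) + 1)
              = 2 ^ (d - 1 - 1) * (Pf d (n - 2 - (lr : ℕ)) + 1)
                + 2 ^ (d - 1 - 1) * (Pf d (n - 2 - (lr : ℕ)) + 1) := by
            rw [h21]; ring
          omega


/-- The universal box is not an axiom. -/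
lemma root_not_mem (hn : 1 < n) (hC : ∀ b : DyadicBox n, b ∈ C ↔ Cond n d b) :
    (fun _ => [] : DyadicBox n) ∉ C := by
  intro h
  rcases (hC _).mp h with ⟨t, ht, hp⟩ | ⟨t, ht, hp⟩ | ⟨j, hj, t, u, v, ht, hu, hp⟩
  · have := (hp ⟨0, by omega⟩).1 rfl; simp at this
  · have := (hp ⟨n - 1, by omega⟩).1 (by simp); simp at this
  · have := (hp ⟨j, by omega⟩).1 (by simp); simp at this

/-- The quantitative root bound. -/
lemma root_bound (hn : 1 < n) (hd : 1 ≤ d)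
    (hC : ∀ b : DyadicBox n, b ∈ C ↔ Cond n d b) :
    ∀ (s : ℕ), OrderedTreeProof n (Equiv.refl (Fin n)) C (fun _ => []) s →
    2 ^ ((d - 1) * n) ≤ s := by
  intro s prf
  rcases prf with ⟨hb⟩ | @⟨b₁, b₂, B, s₁, s₂, lr, p₁, p₂, hres0⟩
  · exact absurd hb (root_not_mem hn hC)
  · have hres := plainRes hres0
    obtain ⟨x, e1, e2, e3⟩ := hres.1
    have hx : x = [] := by simpa using e3.symm
    rw [hx] at e1 e2; simp at e1 e2
    by_cases hd2 : 2 ≤ d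
    · have hb₁top : ∀ m, lr < m → b₁ m = [] := fun m hm => (hres.2.1 m hm).1
      have hb₂top : ∀ m, lr < m → b₂ m = [] := fun m hm => (hres.2.1 m hm).2.1
      -- the root resolution must be on the first coordinate
      have hlr0 : (lr : ℕ) = 0 := by
        by_contra hpos
        have hb₁C : b₁ ∈ C := by
          refine desc hC s₁ b₁ lr p₁ (by omega) hb₁top ⟨[], e1⟩ ?_
          intro m hm z hz _
          have hmlt : m < lr := Fin.lt_def.mpr (by omega)
          have hpre := (plainRes_prefix hres hmlt).1
          simp at hpre
          rw [hpre] at hz; simp at hz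
        have h' := clen hC hb₁C lr
        rw [e1] at h'; simp at h'; omega
      have hb₁nc : b₁ ∉ C := by
        intro h
        have h' := clen hC h lr
        rw [e1] at h'; simp at h'; omega
      have hb₂nc : b₂ ∉ C := by
        intro h
        have h' := clen hC h lr
        rw [e2] at h'; simp at h'; omega
      have i1 := main hn hd2 hC s₁ b₁ lr p₁ hb₁top (by rw [e1]; simp) hb₁nc
      have i2 := main hn hd2 hC s₂ b₂ lr p₂ hb₂top (by rw [e2]; simp) hb₂nc
      have hlen1 : (b₁ lr).length = 1 := by rw [e1]; simp
      have hlen2 : (b₂ lr).length = 1 := by rw [e2]; simp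
      rw [Gd, hlen1, hlr0, if_neg (by omega), if_neg (by omega)] at i1
      rw [Gd, hlen2, hlr0, if_neg (by omega), if_neg (by omega)] at i2
      simp only [Nat.sub_zero] at i1 i2
      -- arithmetic
      have hPf := Pf_ge d (n - 2)
      have hexp : (d - 1) * n ≤ (d - 1) + (d + (d - 1) * (n - 2)) := by
        have h2 : n - 2 + 2 = n := by omega
        calc (d - 1) * n = (d - 1) * (n - 2) + (d - 1) * 2 := by
              rw [← Nat.mul_add, h2]
          _ ≤ (d - 1) + (d + (d - 1) * (n - 2)) := by omega
      have e4 : 2 ^ ((d - 1) * n) ≤ 2 ^ (d - 1) * Pf d (n - 2) := by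
        calc 2 ^ ((d - 1) * n)
            ≤ 2 ^ ((d - 1) + (d + (d - 1) * (n - 2))) :=
              Nat.pow_le_pow_right (by norm_num) hexp
          _ = 2 ^ (d - 1) * (2 ^ d * 2 ^ ((d - 1) * (n - 2))) := by
              rw [pow_add, pow_add]
          _ ≤ 2 ^ (d - 1) * Pf d (n - 2) := Nat.mul_le_mul_left _ hPf
      have hAA : 2 ^ (d - 1 - 1) * (Pf d (n - 2) + 1) + 2 ^ (d - 1 - 1) * (Pf d (n - 2) + 1)
          = 2 ^ (d - 1) * Pf d (n - 2) + 2 ^ (d - 1) := by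
        have h21 : 2 ^ (d - 1) = 2 ^ (d - 1 - 1) * 2 := by rw [← pow_succ]; congr 1; omega
        rw [h21]; ring
      have hg2 : 2 ≤ 2 ^ (d - 1) := by
        calc 2 = 2 ^ 1 := by norm_num
          _ ≤ 2 ^ (d - 1) := Nat.pow_le_pow_right (by norm_num) (by omega)
      have k1 : 2 ^ ((d - 1) * n) + 2
          ≤ 2 ^ (d - 1 - 1) * (Pf d (n - 2) + 1) + 2 ^ (d - 1 - 1) * (Pf d (n - 2) + 1) := by
        rw [hAA]
        exact Nat.add_le_add e4 hg2
      have k2 : 2 ^ (d - 1 - 1) * (Pf d (n - 2) + 1) + 2 ^ (d - 1 - 1) * (Pf d (n - 2) + 1)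
          ≤ (s₁ + 1) + (s₂ + 1) := Nat.add_le_add i1 i2
      have hfin := le_trans k1 k2
      generalize hM : 2 ^ ((d - 1) * n) = M at hfin ⊢
      omega
    · have hdn : (d - 1) * n = 0 := by
        have : d = 1 := by omega
        simp [this]
      rw [hdn]; omega


lemma split_last {l : List Bool} (h : l ≠ []) :
    ∃ t b, l = t ++ [b] ∧ l.getLast? = some b ∧ t.length + 1 = l.length := by
  refine ⟨l.dropLast, l.getLast h, (List.dropLast_append_getLast h).symm,
    List.getLast?_eq_getLast h, ?_⟩
  have h0 : l.length ≠ 0 := by simpa using h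
  simp [List.length_dropLast]
  omega

/-- `C` covers the universal box. -/
lemma covers (hn : 1 < n) (hd : 1 ≤ d) (hC : ∀ b : DyadicBox n, b ∈ C ↔ Cond n d b) :
    ∀ p : DyadicBox n, (∀ i, (p i).length = d) → ∃ a ∈ C, ∀ i, a i <+: p i := by
  intro p hp
  have hne : ∀ i : Fin n, p i ≠ [] := by
    intro i h
    have := hp i; rw [h] at this; simp at this; omega
  set p' : ℕ → List Bool := fun k => if hk : k < n then p ⟨k, hk⟩ else [] with hp'
  by_cases hex : ∃ k, (p' k).getLast? = some false
  · obtain ⟨j, hj, hmin⟩ : ∃ j, (p' j).getLast? = some false ∧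
        ∀ k, k < j → ¬(p' k).getLast? = some false :=
      ⟨Nat.find hex, Nat.find_spec hex, fun k hk => Nat.find_min hex hk⟩
    have hjn : j < n := by
      by_contra h
      rw [hp'] at hj; simp only [dif_neg h] at hj; simp at hj
    have hj' : (p ⟨j, hjn⟩).getLast? = some false := by
      rw [hp'] at hj; simpa [dif_pos hjn] using hj
    obtain ⟨t, b, hsplit, hlast, hlen⟩ := split_last (hne ⟨j, hjn⟩)
    have hb : b = false := Option.some.inj (hlast.symm.trans hj')
    subst hb
    rcases Nat.eq_zero_or_pos j with hj0 | hjpos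
    · -- use a C₁ box
      subst hj0
      refine ⟨fun i => if (i : ℕ) = 0 then p ⟨0, hjn⟩ else [], ?_, ?_⟩
      · rw [hC]
        refine Or.inl ⟨t, by rw [hp ⟨0, hjn⟩] at hlen; omega, ?_⟩
        intro i
        constructor
        · intro h; simp only [if_pos h]; exact hsplit
        · intro h; simp only [if_neg h]
      · intro i
        by_cases h : (i : ℕ) = 0
        · simp only [if_pos h]
          have he : i = ⟨0, hjn⟩ := Fin.ext (by simpa using h)
          rw [he]
        · simp only [if_neg h]; exact List.nil_prefix
    · -- use a pair box at (j-1, j)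
      have hjm : j - 1 < n := by omega
      have hprev : (p ⟨j - 1, hjm⟩).getLast? ≠ some false := by
        have := hmin (j - 1) (by omega)
        rw [hp'] at this; simpa [dif_pos hjm] using this
      obtain ⟨t2, b2, hsplit2, hlast2, hlen2⟩ := split_last (hne ⟨j - 1, hjm⟩)
      have hb2 : b2 = true := by
        rw [hlast2] at hprev
        cases b2
        · simp at hprev
        · rfl
      subst hb2
      refine ⟨fun i => if (i : ℕ) = j - 1 then p ⟨j - 1, hjm⟩ else
        if (i : ℕ) = j then p ⟨j, hjn⟩ else [], ?_, ?_⟩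
      · rw [hC]
        refine Or.inr (Or.inr ⟨j - 1, by omega, t2, t, true,
          by rw [hp ⟨j - 1, hjm⟩] at hlen2; omega,
          by rw [hp ⟨j, hjn⟩] at hlen; omega, ?_⟩)
        intro i
        refine ⟨?_, ?_, ?_⟩
        · intro h; simp only [if_pos h]; exact hsplit2
        · intro h
          simp only [if_neg (show ¬((i : ℕ) = j - 1) by omega),
            if_pos (show (i : ℕ) = j by omega)]
          simpa using hsplit
        · intro h1 h2
          simp only [if_neg h1, if_neg (show ¬((i : ℕ) = j) by omega)]
      · intro i
        by_cases h1 : (i : ℕ) = j - 1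
        · simp only [if_pos h1]
          have he : i = ⟨j - 1, hjm⟩ := Fin.ext (by simpa using h1)
          rw [he]
        · simp only [if_neg h1]
          by_cases h2 : (i : ℕ) = j
          · simp only [if_pos h2]
            have he : i = ⟨j, hjn⟩ := Fin.ext (by simpa using h2)
            rw [he]
          · simp only [if_neg h2]; exact List.nil_prefix
  · -- no component ends in false: use a C_{n+1} box
    push_neg at hex
    have hn1 : n - 1 < n := by omega
    obtain ⟨t, b, hsplit, hlast, hlen⟩ := split_last (hne ⟨n - 1, hn1⟩)
    have hb : b = true := by
      have hh := hex (n - 1)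
      rw [hp'] at hh; simp only [dif_pos hn1] at hh
      rw [hlast] at hh
      cases b
      · simp at hh
      · rfl
    subst hb
    refine ⟨fun i => if (i : ℕ) = n - 1 then p ⟨n - 1, hn1⟩ else [], ?_, ?_⟩
    · rw [hC]
      refine Or.inr (Or.inl ⟨t, by rw [hp ⟨n - 1, hn1⟩] at hlen; omega, ?_⟩)
      intro i
      constructor
      · intro h; simp only [if_pos h]; exact hsplit
      · intro h; simp only [if_neg h]
    · intro i
      by_cases h : (i : ℕ) = n - 1
      · simp only [if_pos h]
        have he : i = ⟨n - 1, hn1⟩ := Fin.ext (by simpa using h)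
        rw [he]
      · simp only [if_neg h]; exact List.nil_prefix


lemma ofFn_getD {m : ℕ} {t : List Bool} (h : t.length = m) :
    List.ofFn (fun i : Fin m => t.getD i false) = t := by
  apply List.ext_getElem
  · simp [h]
  · intro i h1 h2
    simp [List.getD_eq_getElem?_getD, List.getElem?_eq_getElem h2]

lemma card_bound (hn : 1 < n) (hd : 1 ≤ d)
    (hC : ∀ b : DyadicBox n, b ∈ C ↔ Cond n d b) :
    C.ncard ≤ n * 2 ^ (2 * d) := by
  classical
  set f₁ : (Fin (d - 1) → Bool) → DyadicBox n :=
    fun t i => if (i : ℕ) = 0 then List.ofFn t ++ [false] else [] with hf₁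
  set f₂ : (Fin (d - 1) → Bool) → DyadicBox n :=
    fun t i => if (i : ℕ) = n - 1 then List.ofFn t ++ [true] else [] with hf₂
  set f₃ : (Fin (n - 1) × (Fin (d - 1) → Bool) × (Fin (d - 1) → Bool) × Bool) → DyadicBox n :=
    fun q i => if (i : ℕ) = (q.1 : ℕ) then List.ofFn q.2.1 ++ [q.2.2.2]
      else if (i : ℕ) = (q.1 : ℕ) + 1 then List.ofFn q.2.2.1 ++ [!q.2.2.2] else [] with hf₃
  have hsub : C ⊆ (f₁ '' Set.univ) ∪ (f₂ '' Set.univ) ∪ (f₃ '' Set.univ) := by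
    intro b hb
    rcases (hC b).mp hb with ⟨t, ht, hp⟩ | ⟨t, ht, hp⟩ | ⟨j, hj, t, u, v, ht, hu, hp⟩
    · left; left
      refine ⟨fun i => t.getD i false, Set.mem_univ _, ?_⟩
      funext i
      rw [hf₁]
      by_cases h : (i : ℕ) = 0
      · simp only [if_pos h, ofFn_getD (show t.length = d - 1 by omega)]
        exact ((hp i).1 h).symm
      · simp only [if_neg h]; exact ((hp i).2 h).symm
    · left; right
      refine ⟨fun i => t.getD i false, Set.mem_univ _, ?_⟩
      funext i
      rw [hf₂]
      by_cases h : (i : ℕ) = n - 1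
      · simp only [if_pos h, ofFn_getD (show t.length = d - 1 by omega)]
        exact ((hp i).1 h).symm
      · simp only [if_neg h]; exact ((hp i).2 h).symm
    · right
      refine ⟨(⟨j, by omega⟩, fun i => t.getD i false, fun i => u.getD i false, v),
        Set.mem_univ _, ?_⟩
      funext i
      rw [hf₃]
      simp only
      by_cases h1 : (i : ℕ) = j
      · rw [if_pos (by simpa using h1), ofFn_getD (show t.length = d - 1 by omega)]
        exact ((hp i).1 h1).symm
      · rw [if_neg (by simpa using h1)]
        by_cases h2 : (i : ℕ) = j + 1
        · rw [if_pos (by simpa using h2), ofFn_getD (show u.length = d - 1 by omega)]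
          exact ((hp i).2.1 h2).symm
        · rw [if_neg (by simpa using h2)]
          exact ((hp i).2.2 h1 h2).symm
  have hcard : C.ncard ≤ (f₁ '' Set.univ ∪ f₂ '' Set.univ ∪ f₃ '' Set.univ).ncard :=
    Set.ncard_le_ncard hsub
      (((Set.finite_univ.image f₁).union (Set.finite_univ.image f₂)).union
        (Set.finite_univ.image f₃))
  have h1 : (f₁ '' Set.univ).ncard ≤ 2 ^ (d - 1) := by
    calc (f₁ '' Set.univ).ncard ≤ (Set.univ : Set (Fin (d - 1) → Bool)).ncard :=
          Set.ncard_image_le Set.finite_univ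
      _ = 2 ^ (d - 1) := by
          simp [Set.ncard_univ, Nat.card_eq_fintype_card]
  have h2 : (f₂ '' Set.univ).ncard ≤ 2 ^ (d - 1) := by
    calc (f₂ '' Set.univ).ncard ≤ (Set.univ : Set (Fin (d - 1) → Bool)).ncard :=
          Set.ncard_image_le Set.finite_univ
      _ = 2 ^ (d - 1) := by
          simp [Set.ncard_univ, Nat.card_eq_fintype_card]
  have h3 : (f₃ '' Set.univ).ncard ≤ (n - 1) * (2 ^ (d - 1) * (2 ^ (d - 1) * 2)) := by
    calc (f₃ '' Set.univ).ncard
        ≤ (Set.univ : Set (Fin (n - 1) × (Fin (d - 1) → Bool) × (Fin (d - 1) → Bool) × Bool)).ncard :=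
          Set.ncard_image_le Set.finite_univ
      _ = (n - 1) * (2 ^ (d - 1) * (2 ^ (d - 1) * 2)) := by
          simp [Set.ncard_univ, Nat.card_eq_fintype_card]
  have hU : (f₁ '' Set.univ ∪ f₂ '' Set.univ ∪ f₃ '' Set.univ).ncard
      ≤ 2 ^ (d - 1) + 2 ^ (d - 1) + (n - 1) * (2 ^ (d - 1) * (2 ^ (d - 1) * 2)) := by
    calc (f₁ '' Set.univ ∪ f₂ '' Set.univ ∪ f₃ '' Set.univ).ncard
        ≤ (f₁ '' Set.univ ∪ f₂ '' Set.univ).ncard + (f₃ '' Set.univ).ncard :=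
          Set.ncard_union_le _ _
      _ ≤ ((f₁ '' Set.univ).ncard + (f₂ '' Set.univ).ncard) + (f₃ '' Set.univ).ncard :=
          Nat.add_le_add_right (Set.ncard_union_le _ _) _
      _ ≤ 2 ^ (d - 1) + 2 ^ (d - 1) + (n - 1) * (2 ^ (d - 1) * (2 ^ (d - 1) * 2)) := by
          exact Nat.add_le_add (Nat.add_le_add h1 h2) h3
  have hA2 : 2 ^ (d - 1) * (2 ^ (d - 1) * 2) = 2 ^ (2 * d - 1) := by
    rw [← pow_succ, ← pow_add]; congr 1; omega
  have hAA : 2 ^ (d - 1) + 2 ^ (d - 1) = 2 ^ d := by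
    rw [← two_mul, ← pow_succ']; congr 1; omega
  have h2d : 2 ^ d ≤ 2 ^ (2 * d - 1) := Nat.pow_le_pow_right (by norm_num) (by omega)
  have hfin : 2 ^ (d - 1) + 2 ^ (d - 1) + (n - 1) * (2 ^ (d - 1) * (2 ^ (d - 1) * 2))
      ≤ n * 2 ^ (2 * d) := by
    rw [hA2, hAA]
    calc 2 ^ d + (n - 1) * 2 ^ (2 * d - 1)
        ≤ 2 ^ (2 * d - 1) + (n - 1) * 2 ^ (2 * d - 1) := by omega
      _ = (1 + (n - 1)) * 2 ^ (2 * d - 1) := by ring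
      _ = n * 2 ^ (2 * d - 1) := by congr 1; omega
      _ ≤ n * 2 ^ (2 * d) :=
          Nat.mul_le_mul_left n (Nat.pow_le_pow_right (by norm_num) (by omega))
  omega


/-- Reverse the coordinates and flip all bits. -/
def TB {n : ℕ} (b : DyadicBox n) : DyadicBox n := fun i => (b i.rev).map not

lemma TB_mem (hn : 1 < n) (hC : ∀ b : DyadicBox n, b ∈ C ↔ Cond n d b)
    {b : DyadicBox n} (hb : b ∈ C) : TB b ∈ C := by
  rcases (hC b).mp hb with ⟨t, ht, hp⟩ | ⟨t, ht, hp⟩ | ⟨j, hj, t, u, v, ht, hu, hp⟩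
  · rw [hC]
    refine Or.inr (Or.inl ⟨t.map not, by simpa using ht, ?_⟩)
    intro i
    have hrv : (i.rev : ℕ) = n - (i + 1) := Fin.val_rev i
    constructor
    · intro h
      have h0 : (i.rev : ℕ) = 0 := by omega
      rw [TB, (hp i.rev).1 h0]
      simp
    · intro h
      have h0 : (i.rev : ℕ) ≠ 0 := by have := i.isLt; omega
      rw [TB, (hp i.rev).2 h0]
      simp
  · rw [hC]
    refine Or.inl ⟨t.map not, by simpa using ht, ?_⟩
    intro i
    have hrv : (i.rev : ℕ) = n - (i + 1) := Fin.val_rev i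
    constructor
    · intro h
      have h0 : (i.rev : ℕ) = n - 1 := by omega
      rw [TB, (hp i.rev).1 h0]
      simp
    · intro h
      have h0 : (i.rev : ℕ) ≠ n - 1 := by have := i.isLt; omega
      rw [TB, (hp i.rev).2 h0]
      simp
  · rw [hC]
    refine Or.inr (Or.inr ⟨n - 2 - j, by omega, u.map not, t.map not, v,
      by simpa using hu, by simpa using ht, ?_⟩)
    intro i
    have hrv : (i.rev : ℕ) = n - (i + 1) := Fin.val_rev i
    have hilt := i.isLt
    refine ⟨?_, ?_, ?_⟩
    · intro h
      have h0 : (i.rev : ℕ) = j + 1 := by omega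
      rw [TB, (hp i.rev).2.1 h0]
      simp
    · intro h
      have h0 : (i.rev : ℕ) = j := by omega
      rw [TB, (hp i.rev).1 h0]
      simp
    · intro h1 h2
      have h0 : (i.rev : ℕ) ≠ j ∧ (i.rev : ℕ) ≠ j + 1 := by omega
      rw [TB, (hp i.rev).2.2 h0.1 h0.2]
      simp

lemma rev_to_refl (hn : 1 < n) (hC : ∀ b : DyadicBox n, b ∈ C ↔ Cond n d b) :
    ∀ {s : ℕ} {B : DyadicBox n}, OrderedTreeProof n Fin.revPerm C B s →
    OrderedTreeProof n (Equiv.refl (Fin n)) C (TB B) s := by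
  intro s B h
  induction h with
  | leaf hb => exact .leaf (TB_mem hn hC hb)
  | @node b₁ b₂ b s₁ s₂ ℓ p₁ p₂ hres ih₁ ih₂ =>
    have hres' : IsOrderedResolvent n (Equiv.refl (Fin n)) (TB b₂) (TB b₁) ℓ (TB b) := by
      obtain ⟨⟨x, e1, e2, e3⟩, h2, h3⟩ := hres
      refine ⟨⟨x.map not, ?_, ?_, ?_⟩, ?_, ?_⟩
      · show (b₂ ((Fin.revPerm : Equiv.Perm (Fin n)) ℓ)).map not = x.map not ++ [false]
        rw [e2]; simp
      · show (b₁ ((Fin.revPerm : Equiv.Perm (Fin n)) ℓ)).map not = x.map not ++ [true]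
        rw [e1]; simp
      · show (b ((Fin.revPerm : Equiv.Perm (Fin n)) ℓ)).map not = x.map not
        rw [e3]
      · intro m hm
        obtain ⟨q1, q2, q3⟩ := h2 m hm
        refine ⟨?_, ?_, ?_⟩
        · show (b₂ ((Fin.revPerm : Equiv.Perm (Fin n)) m)).map not = []
          rw [q2]; simp
        · show (b₁ ((Fin.revPerm : Equiv.Perm (Fin n)) m)).map not = []
          rw [q1]; simp
        · show (b ((Fin.revPerm : Equiv.Perm (Fin n)) m)).map not = []
          rw [q3]; simp
      · intro m hm
        rcases h3 m hm with ⟨hpre, heq⟩ | ⟨hpre, heq⟩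
        · exact Or.inr ⟨hpre.map not, congrArg (List.map not) heq⟩
        · exact Or.inl ⟨hpre.map not, congrArg (List.map not) heq⟩
    have := OrderedTreeProof.node ih₂ ih₁ hres'
    rwa [Nat.add_comm s₂ s₁] at this

lemma rev_root_bound (hn : 1 < n) (hd : 1 ≤ d)
    (hC : ∀ b : DyadicBox n, b ∈ C ↔ Cond n d b) :
    ∀ (s : ℕ), OrderedTreeProof n Fin.revPerm C (fun _ => []) s →
    2 ^ ((d - 1) * n) ≤ s := by
  intro s prf
  have h := rev_to_refl hn hC prf
  have hTB : TB (fun _ => [] : DyadicBox n) = (fun _ => [] : DyadicBox n) := by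
    funext i; rfl
  rw [hTB] at h
  exact root_bound hn hd hC s h


lemma final_real (hn : 1 < n) (hd : 1 ≤ d) (N s : ℕ)
    (hN : N ≤ n * 2 ^ (2 * d)) (hs : 2 ^ ((d - 1) * n) ≤ s) :
    ((4 * (n : ℝ))⁻¹) ^ ((n : ℝ) / 2) * (N : ℝ) ^ ((n : ℝ) / 2) ≤ (s : ℝ) := by
  have hn0 : (0 : ℝ) < n := by exact_mod_cast Nat.lt_of_lt_of_le Nat.zero_lt_one hn.le
  have h4n : (0 : ℝ) < 4 * n := by positivity
  have hhalf : (0 : ℝ) ≤ (n : ℝ) / 2 := by positivity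
  have hy : (0 : ℝ) ≤ (2 : ℝ) ^ (d - 1) := by positivity
  calc ((4 * (n : ℝ))⁻¹) ^ ((n : ℝ) / 2) * (N : ℝ) ^ ((n : ℝ) / 2)
      = ((4 * (n : ℝ))⁻¹ * N) ^ ((n : ℝ) / 2) :=
        (Real.mul_rpow (by positivity) (by positivity)).symm
    _ ≤ ((4 * (n : ℝ))⁻¹ * ((n : ℝ) * 2 ^ (2 * d))) ^ ((n : ℝ) / 2) := by
        apply Real.rpow_le_rpow (by positivity) ?_ hhalf
        apply mul_le_mul_of_nonneg_left ?_ (by positivity)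
        calc (N : ℝ) ≤ ((n * 2 ^ (2 * d) : ℕ) : ℝ) := Nat.cast_le.mpr hN
          _ = (n : ℝ) * 2 ^ (2 * d) := by push_cast; ring
    _ = (((2 : ℝ) ^ (d - 1)) ^ 2) ^ ((n : ℝ) / 2) := by
        congr 1
        have hne : (n : ℝ) ≠ 0 := ne_of_gt hn0
        have hsplit : 2 * d = 2 * (d - 1) + 2 := by omega
        rw [hsplit, pow_add, ← pow_mul]
        field_simp
        ring
    _ = ((2 : ℝ) ^ (d - 1)) ^ ((2 : ℝ) * ((n : ℝ) / 2)) := by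
        rw [← Real.rpow_natCast ((2 : ℝ) ^ (d - 1)) 2, ← Real.rpow_mul hy]
        norm_num
    _ = ((2 : ℝ) ^ (d - 1)) ^ ((n : ℝ)) := by
        congr 1; ring
    _ = (2 : ℝ) ^ ((d - 1) * n) := by
        rw [Real.rpow_natCast, ← pow_mul]
    _ ≤ (s : ℝ) := by
        calc (2 : ℝ) ^ ((d - 1) * n) = ((2 ^ ((d - 1) * n) : ℕ) : ℝ) := by push_cast; ring
          _ ≤ (s : ℝ) := Nat.cast_le.mpr hs

end TORLB

/-- Tree ordered geometric resolution lower bound: for every `n > 1` there is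
an `α > 0` (depending only on `n`) such that for every bit depth `d ≥ 1`, the
explicit set `C` of boxes described below covers the universal box, yet every
tree ordered geometric resolution proof of the universal box from `C` — with
respect to the coordinate order `(1,…,n)` or its reverse — has at least
`α·N^{n/2}` internal nodes, where `N = |C|`.  Here `C` consists of: all boxes
whose first component is a length-`d` string ending in `0` and whose other
components are `λ`; all boxes whose last component is a length-`d` string
ending in `1` and whose other components are `λ`; and, for each pair of
consecutive coordinates, all boxes whose two components there are length-`d`
strings with complementary last bits and whose other components are `λ`. -/
theorem tree_ordered_resolution_lower_bound (n : ℕ) (hn : 1 < n) :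
    ∃ α : ℝ, 0 < α ∧ ∀ d : ℕ, 1 ≤ d → ∀ C : Set (DyadicBox n),
      (∀ b : DyadicBox n, b ∈ C ↔
        ((∃ t : List Bool, t.length + 1 = d ∧
            ∀ i : Fin n, ((i : ℕ) = 0 → b i = t ++ [false]) ∧
              ((i : ℕ) ≠ 0 → b i = [])) ∨
         (∃ t : List Bool, t.length + 1 = d ∧
            ∀ i : Fin n, ((i : ℕ) = n - 1 → b i = t ++ [true]) ∧
              ((i : ℕ) ≠ n - 1 → b i = [])) ∨
         (∃ j : ℕ, j + 2 ≤ n ∧ ∃ t u : List Bool, ∃ v : Bool,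
            t.length + 1 = d ∧ u.length + 1 = d ∧
            ∀ i : Fin n, ((i : ℕ) = j → b i = t ++ [v]) ∧
              ((i : ℕ) = j + 1 → b i = u ++ [!v]) ∧
              ((i : ℕ) ≠ j → (i : ℕ) ≠ j + 1 → b i = [])))) →
      DyadicBox.Covers d C (fun _ => []) ∧
      (∀ s : ℕ,
        OrderedTreeProof n (Equiv.refl (Fin n)) C (fun _ => []) s →
        α * (C.ncard : ℝ) ^ ((n : ℝ) / 2) ≤ (s : ℝ)) ∧
      (∀ s : ℕ,
        OrderedTreeProof n Fin.revPerm C (fun _ => []) s →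
        α * (C.ncard : ℝ) ^ ((n : ℝ) / 2) ≤ (s : ℝ)) := by
  refine ⟨((4 * (n : ℝ))⁻¹) ^ ((n : ℝ) / 2), ?_, ?_⟩
  · apply Real.rpow_pos_of_pos
    have : (0 : ℝ) < n := by exact_mod_cast Nat.lt_of_lt_of_le Nat.zero_lt_one hn.le
    positivity
  · intro d hd C hC
    have hC' : ∀ b : DyadicBox n, b ∈ C ↔ TORLB.Cond n d b := hC
    refine ⟨fun p hp _ => TORLB.covers hn hd hC' p hp, ?_, ?_⟩
    · intro s hprf
      exact TORLB.final_real hn hd _ s (TORLB.card_bound hn hd hC')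
        (TORLB.root_bound hn hd hC' s hprf)
    · intro s hprf
      exact TORLB.final_real hn hd _ s (TORLB.card_bound hn hd hC')
        (TORLB.rev_root_bound hn hd hC' s hprf)
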